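/- Let κ be an uncountable cardinal, D a κ-complete ultrafilter on κ, and P a κ-cc partial order. Then the diagonal embedding of P into the ultrapower P^κ/D is a complete embedding: for every maximal antichain A of P and every function f : κ → P there exists p ∈ A such that {α < κ : f(α) and p are compatible in P} ∈ D; consequently, the set of classes of the constant functions with values in A is a maximal antichain of P^κ/D. -/

import Mathlib

open Filter

/-- Two elements of a preorder are compatible if they have a common lower bound. -/
def Compat {Q : Type*} [Preorder Q] (p q : Q) : Prop := ∃ r, r ≤ p ∧ r ≤ q

/-- A maximal antichain: a set of pairwise incompatible elements such that every element
is compatible with some member. -/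
def IsMaxAntichainP {Q : Type*} [Preorder Q] (A : Set Q) : Prop :=
  (∀ p ∈ A, ∀ q ∈ A, p ≠ q → ¬ Compat p q) ∧ ∀ p : Q, ∃ q ∈ A, Compat p q

/-- If `κ` is uncountable, `D` a `κ`-complete ultrafilter on `κ` and `P` is
`κ`-cc, then the diagonal embedding of `P` into `P^κ/D` is a complete embedding. -/
theorem stmt_1 {κ P : Type u} [PartialOrder P]
    (hκ : Cardinal.aleph0 < Cardinal.mk κ)
    (D : Ultrafilter κ)
    (hcomplete : ∀ S : Set (Set κ), Cardinal.mk S < Cardinal.mk κ →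
      (∀ s ∈ S, s ∈ D) → ⋂₀ S ∈ D)
    (hcc : ∀ A : Set P, (∀ p ∈ A, ∀ q ∈ A, p ≠ q → ¬ Compat p q) →
      Cardinal.mk A < Cardinal.mk κ)
    (A : Set P) (hA : IsMaxAntichainP A) :
    (∀ f : κ → P, ∃ p ∈ A, {α : κ | Compat (f α) p} ∈ D) ∧
      IsMaxAntichainP
        ((fun p : P => ((fun _ => p : κ → P) : Germ (D : Filter κ) P)) '' A) := by
  have key : ∀ f : κ → P, ∃ p ∈ A, {α : κ | Compat (f α) p} ∈ D := by
    intro f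
    by_contra h
    push_neg at h
    have hmem : ∀ p ∈ A, {α : κ | Compat (f α) p}ᶜ ∈ D := fun p hp =>
      Ultrafilter.compl_mem_iff_notMem.2 (h p hp)
    set S : Set (Set κ) := (fun p => {α : κ | Compat (f α) p}ᶜ) '' A with hS
    have hcard : Cardinal.mk S < Cardinal.mk κ :=
      lt_of_le_of_lt Cardinal.mk_image_le (hcc A hA.1)
    have hinter : ⋂₀ S ∈ D :=
      hcomplete S hcard (by rintro s ⟨p, hp, rfl⟩; exact hmem p hp)
    have hempty : ⋂₀ S = ∅ := by
      ext α
      simp only [Set.mem_sInter, Set.mem_empty_iff_false, iff_false]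
      intro hall
      obtain ⟨p, hp, hcompat⟩ := hA.2 (f α)
      exact hall _ ⟨p, hp, rfl⟩ hcompat
    rw [hempty] at hinter
    exact Filter.empty_notMem (D : Filter κ) hinter
  refine ⟨key, ?_, ?_⟩
  · rintro _ ⟨p, hp, rfl⟩ _ ⟨q, hq, rfl⟩ hne hcompat
    have hpq : p ≠ q := by rintro rfl; exact hne rfl
    obtain ⟨r, hr1, hr2⟩ := hcompat
    induction r using Filter.Germ.inductionOn with
    | h g =>
      rw [Filter.Germ.coe_le] at hr1 hr2
      obtain ⟨α, h1, h2⟩ := (hr1.and hr2).exists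
      exact hA.1 p hp q hq hpq ⟨g α, h1, h2⟩
  · intro x
    induction x using Filter.Germ.inductionOn with
    | h f =>
      obtain ⟨p, hp, hDf⟩ := key f
      refine ⟨_, ⟨p, hp, rfl⟩, ?_⟩
      classical
      set r : κ → P := fun α => if h : Compat (f α) p then h.choose else f α with hr
      have h1 : ∀ α ∈ {α : κ | Compat (f α) p}, r α ≤ f α ∧ r α ≤ p := by
        intro α hα
        have hα' : Compat (f α) p := hα
        simp only [hr, dif_pos hα']
        exact ⟨hα'.choose_spec.1, hα'.choose_spec.2⟩
      refine ⟨(r : Germ (D : Filter κ) P), ?_, ?_⟩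
      · rw [Filter.Germ.coe_le]
        exact Filter.mem_of_superset hDf fun α hα => (h1 α hα).1
      · rw [Filter.Germ.coe_le]
        exact Filter.mem_of_superset hDf fun α hα => (h1 α hα).2
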